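/- Energy conservation with a weakly imposed homogeneous pressure boundary condition via the SAT penalty method (Appendix A, matrix form). Let n̂, n₁, n₂, m be positive integers. Let Ĥ, Ĵ be positive diagonal n̂×n̂ real matrices, H₁, J₁ positive diagonal n₁×n₁, H₂, J₂ positive diagonal n₂×n₂, and M̂_b, Ĵ_b positive diagonal m×m real matrices. Let D₁ ∈ ℝ^{n₁×n̂}, D₂ ∈ ℝ^{n₂×n̂}, D̂₁ ∈ ℝ^{n̂×n₁}, D̂₂ ∈ ℝ^{n̂×n₂} satisfy Ĥ·D̂₂ = −D₂ᵀ·H₂ (periodic in the second direction) and the SBP-with-boundary relation Ĥ·D̂₁ + D₁ᵀ·H₁ = −L·M̂_b·Λ, where L ∈ ℝ^{n₁×m} and Λ ∈ ℝ^{m×n̂} are boundary restriction matrices satisfying the compatibility condition Lᵀ·J₁ = Ĵ_b·Lᵀ. Set H = blockdiag(H₁, H₂), J = blockdiag(J₁, J₂), and let G be an invertible (n₁+n₂)×(n₁+n₂) real matrix such that H·J·G⁻¹ is symmetric. Suppose p : ℝ → ℝ^{n̂}, v¹ : ℝ → ℝ^{n₁}, v² : ℝ → ℝ^{n₂} are differentiable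 and satisfy, for all t, Ĵ·p′(t) = −(D̂₁·J₁·v¹(t) + D̂₂·J₂·v²(t)) and (v¹, v²)′(t) = −G·(D₁·p(t) − S(t), D₂·p(t)) with the SAT penalty S(t) = −H₁⁻¹·J₁⁻¹·L·M̂_b·Ĵ_b·Λ·p(t). Then the discrete energy E(t) = ½·p(t)ᵀ·Ĥ·Ĵ·p(t) + ½·(v¹(t), v²(t))ᵀ·H·J·G⁻¹·(v¹(t), v²(t)) has derivative zero for every t; in particular E is constant. -/

import Mathlib

open Matrix

lemma quad_hasDerivAt {n : Type*} [Fintype n] (A : Matrix n n ℝ)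
    (f : ℝ → n → ℝ) (f' : n → ℝ) (t : ℝ) (hf : HasDerivAt f f' t) :
    HasDerivAt (fun s => f s ⬝ᵥ A *ᵥ f s) (f' ⬝ᵥ A *ᵥ f t + f t ⬝ᵥ A *ᵥ f') t := by
  have hcomp : ∀ i, HasDerivAt (fun s => f s i) (f' i) t := fun i =>
    ((ContinuousLinearMap.proj i : (n → ℝ) →L[ℝ] ℝ).hasFDerivAt.comp_hasDerivAt t hf)
  have key : HasDerivAt (fun s => ∑ i, f s i * ∑ j, A i j * f s j)
      (∑ i, (f' i * (∑ j, A i j * f t j) + f t i * (∑ j, A i j * f' j))) t := by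
    apply HasDerivAt.fun_sum
    intro i _
    exact (hcomp i).mul (HasDerivAt.fun_sum fun j _ => (hcomp j).const_mul (A i j))
  have heq : (fun s => f s ⬝ᵥ A *ᵥ f s) = fun s => ∑ i, f s i * ∑ j, A i j * f s j := by
    funext s; simp [dotProduct, mulVec]
  rw [heq]
  convert key using 1
  simp [dotProduct, mulVec, Finset.sum_add_distrib]

lemma dot_symm_swap {n : Type*} [Fintype n] (A : Matrix n n ℝ) (h : Aᵀ = A)
    (x y : n → ℝ) : x ⬝ᵥ A *ᵥ y = y ⬝ᵥ A *ᵥ x := by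
  conv_lhs => rw [dotProduct_mulVec, ← h, vecMul_transpose, dotProduct_comm]

lemma dot_trans {m n : Type*} [Fintype m] [Fintype n] (A : Matrix m n ℝ)
    (x : m → ℝ) (y : n → ℝ) : x ⬝ᵥ A *ᵥ y = y ⬝ᵥ Aᵀ *ᵥ x := by
  rw [dotProduct_mulVec, mulVec_transpose, dotProduct_comm]

/-- Energy conservation with a weakly imposed homogeneous pressure boundary condition
via the SAT penalty method (Appendix A, matrix form). -/
theorem stmt16
    (nh n1 n2 m : ℕ) (hnh : 0 < nh) (hn1 : 0 < n1) (hn2 : 0 < n2) (hm : 0 < m)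
    (Hh Jh : Matrix (Fin nh) (Fin nh) ℝ) (dHh dJh : Fin nh → ℝ)
    (hHh : Hh = diagonal dHh) (hdHh : ∀ i, 0 < dHh i)
    (hJh : Jh = diagonal dJh) (hdJh : ∀ i, 0 < dJh i)
    (H1 J1 : Matrix (Fin n1) (Fin n1) ℝ) (dH1 dJ1 : Fin n1 → ℝ)
    (hH1 : H1 = diagonal dH1) (hdH1 : ∀ i, 0 < dH1 i)
    (hJ1 : J1 = diagonal dJ1) (hdJ1 : ∀ i, 0 < dJ1 i)
    (H2 J2 : Matrix (Fin n2) (Fin n2) ℝ) (dH2 dJ2 : Fin n2 → ℝ)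
    (hH2 : H2 = diagonal dH2) (hdH2 : ∀ i, 0 < dH2 i)
    (hJ2 : J2 = diagonal dJ2) (hdJ2 : ∀ i, 0 < dJ2 i)
    (Mb Jb : Matrix (Fin m) (Fin m) ℝ) (dMb dJb : Fin m → ℝ)
    (hMb : Mb = diagonal dMb) (hdMb : ∀ i, 0 < dMb i)
    (hJb : Jb = diagonal dJb) (hdJb : ∀ i, 0 < dJb i)
    (D1 : Matrix (Fin n1) (Fin nh) ℝ) (D2 : Matrix (Fin n2) (Fin nh) ℝ)
    (Dh1 : Matrix (Fin nh) (Fin n1) ℝ) (Dh2 : Matrix (Fin nh) (Fin n2) ℝ)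
    (L : Matrix (Fin n1) (Fin m) ℝ) (Lam : Matrix (Fin m) (Fin nh) ℝ)
    (hSBP2 : Hh * Dh2 = -(D2ᵀ * H2))
    (hSBP1 : Hh * Dh1 + D1ᵀ * H1 = -(L * Mb * Lam)ᵀ)
    (hcompat : Lᵀ * J1 = Jb * Lᵀ)
    (H J : Matrix (Fin n1 ⊕ Fin n2) (Fin n1 ⊕ Fin n2) ℝ)
    (hH : H = fromBlocks H1 0 0 H2) (hJ : J = fromBlocks J1 0 0 J2)
    (G : Matrix (Fin n1 ⊕ Fin n2) (Fin n1 ⊕ Fin n2) ℝ) (hG : IsUnit G)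
    (hsym : (H * J * G⁻¹)ᵀ = H * J * G⁻¹)
    (p : ℝ → Fin nh → ℝ) (v1 : ℝ → Fin n1 → ℝ) (v2 : ℝ → Fin n2 → ℝ)
    (p' : ℝ → Fin nh → ℝ) (w' : ℝ → (Fin n1 ⊕ Fin n2) → ℝ)
    (S : ℝ → Fin n1 → ℝ)
    (hS : ∀ t, S t = -(H1⁻¹ *ᵥ (J1⁻¹ *ᵥ (L *ᵥ (Mb *ᵥ (Jb *ᵥ (Lam *ᵥ p t)))))))
    (hp : ∀ t, HasDerivAt p (p' t) t)
    (hw : ∀ t, HasDerivAt (fun s => Sum.elim (v1 s) (v2 s)) (w' t) t)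
    (hode_p : ∀ t, Jh *ᵥ p' t = -(Dh1 *ᵥ (J1 *ᵥ v1 t) + Dh2 *ᵥ (J2 *ᵥ v2 t)))
    (hode_v : ∀ t, w' t = -(G *ᵥ Sum.elim (D1 *ᵥ p t - S t) (D2 *ᵥ p t)))
    (E : ℝ → ℝ)
    (hE : ∀ t, E t = (1/2) * (p t ⬝ᵥ (Hh * Jh) *ᵥ p t)
        + (1/2) * (Sum.elim (v1 t) (v2 t) ⬝ᵥ (H * J * G⁻¹) *ᵥ Sum.elim (v1 t) (v2 t))) :
    ∀ t, HasDerivAt E 0 t := by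
  intro t
  have hAsym : (Hh * Jh)ᵀ = Hh * Jh := by
    rw [hHh, hJh]; simp [diagonal_mul_diagonal]
  have hH1inv : H1⁻¹ = diagonal (fun i => (dH1 i)⁻¹) := by
    apply inv_eq_right_inv
    rw [hH1, diagonal_mul_diagonal]
    ext i j
    rcases eq_or_ne i j with rfl | hij
    · simp only [diagonal_apply_eq, Matrix.one_apply_eq]
      exact mul_inv_cancel₀ (hdH1 i).ne'
    · simp only [diagonal_apply_ne _ hij, Matrix.one_apply_ne hij]
  have hJ1inv : J1⁻¹ = diagonal (fun i => (dJ1 i)⁻¹) := by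
    apply inv_eq_right_inv
    rw [hJ1, diagonal_mul_diagonal]
    ext i j
    rcases eq_or_ne i j with rfl | hij
    · simp only [diagonal_apply_eq, Matrix.one_apply_eq]
      exact mul_inv_cancel₀ (hdJ1 i).ne'
    · simp only [diagonal_apply_ne _ hij, Matrix.one_apply_ne hij]
  have hone : H1 * J1 * H1⁻¹ * J1⁻¹ = 1 := by
    rw [hH1inv, hJ1inv, hH1, hJ1, diagonal_mul_diagonal, diagonal_mul_diagonal,
      diagonal_mul_diagonal]
    ext i j
    rcases eq_or_ne i j with rfl | hij
    · simp only [diagonal_apply_eq, Matrix.one_apply_eq]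
      field_simp
      exact div_self (mul_pos (hdH1 i) (hdJ1 i)).ne'
    · simp only [diagonal_apply_ne _ hij, Matrix.one_apply_ne hij]
  have hcompat' : J1 * L = L * Jb := by
    have h := congrArg transpose hcompat
    rw [transpose_mul, transpose_mul, transpose_transpose, hJ1, hJb, diagonal_transpose,
      diagonal_transpose, ← hJ1, ← hJb] at h
    exact h
  have hJbMb : Jb * Mb = Mb * Jb := by
    rw [hJb, hMb, diagonal_mul_diagonal, diagonal_mul_diagonal]
    exact congrArg diagonal (funext fun i => mul_comm _ _)
  have hGinv : G⁻¹ * G = 1 := nonsing_inv_mul G ((isUnit_iff_isUnit_det G).mp hG)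
  have dq1 := quad_hasDerivAt (Hh * Jh) p (p' t) t (hp t)
  have dq2 := quad_hasDerivAt (H * J * G⁻¹) (fun s => Sum.elim (v1 s) (v2 s)) (w' t) t (hw t)
  have hEfun : E = fun s => (1/2) * (p s ⬝ᵥ (Hh * Jh) *ᵥ p s)
      + (1/2) * (Sum.elim (v1 s) (v2 s) ⬝ᵥ (H * J * G⁻¹) *ᵥ Sum.elim (v1 s) (v2 s)) :=
    funext hE
  rw [hEfun]
  have hD := (dq1.const_mul (1/2 : ℝ)).add (dq2.const_mul (1/2 : ℝ))
  simp only [Pi.add_def] at hD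
  refine hD.congr_deriv ?_
  symm
  rw [dot_symm_swap _ hAsym (p' t) (p t), dot_symm_swap _ hsym (w' t) (Sum.elim (v1 t) (v2 t))]
  have h1 : (Hh * Jh) *ᵥ p' t
      = -(((Hh * Dh1) *ᵥ (J1 *ᵥ v1 t)) + ((Hh * Dh2) *ᵥ (J2 *ᵥ v2 t))) := by
    rw [← mulVec_mulVec, hode_p t, mulVec_neg, mulVec_add,
      mulVec_mulVec (J1 *ᵥ v1 t) Hh Dh1, mulVec_mulVec (J2 *ᵥ v2 t) Hh Dh2]
  have h2 : (H * J * G⁻¹) *ᵥ w' t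
      = -(Sum.elim ((H1 * J1) *ᵥ (D1 *ᵥ p t - S t)) ((H2 * J2) *ᵥ (D2 *ᵥ p t))) := by
    rw [hode_v t, mulVec_neg, mulVec_mulVec, Matrix.mul_assoc, hGinv, Matrix.mul_one]
    rw [hH, hJ, fromBlocks_multiply]
    simp [fromBlocks_mulVec]
  have hm2 : (D2ᵀ * H2 * J2)ᵀ = H2 * J2 * D2 := by
    rw [transpose_mul, transpose_mul, transpose_transpose, hH2, hJ2, diagonal_transpose,
      diagonal_transpose, ← Matrix.mul_assoc, diagonal_mul_diagonal, diagonal_mul_diagonal]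
    exact congrArg (· * D2) (congrArg diagonal (funext fun i => mul_comm _ _))
  have c2 : p t ⬝ᵥ (Hh * Dh2) *ᵥ (J2 *ᵥ v2 t)
      = -(v2 t ⬝ᵥ (H2 * J2) *ᵥ (D2 *ᵥ p t)) := by
    rw [hSBP2, neg_mulVec, dotProduct_neg, neg_inj, mulVec_mulVec, dot_trans, hm2,
      ← mulVec_mulVec]
  have hDh1 : Hh * Dh1 = -(L * Mb * Lam)ᵀ - D1ᵀ * H1 := eq_sub_of_add_eq hSBP1
  have hA1S : (H1 * J1) *ᵥ S t = -((L * Mb * Jb * Lam) *ᵥ p t) := by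
    rw [hS t, mulVec_neg]
    congr 1
    simp only [mulVec_mulVec]
    simp only [← Matrix.mul_assoc]
    rw [hone, Matrix.one_mul]
  have hm1 : (D1ᵀ * H1 * J1)ᵀ = H1 * J1 * D1 := by
    rw [transpose_mul, transpose_mul, transpose_transpose, hH1, hJ1, diagonal_transpose,
      diagonal_transpose, ← Matrix.mul_assoc, diagonal_mul_diagonal, diagonal_mul_diagonal]
    exact congrArg (· * D1) (congrArg diagonal (funext fun i => mul_comm _ _))
  have hm1b : ((L * Mb * Lam)ᵀ * J1)ᵀ = L * Mb * Jb * Lam := by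
    rw [transpose_mul, transpose_transpose, hJ1, diagonal_transpose, ← hJ1]
    calc J1 * (L * Mb * Lam) = J1 * L * Mb * Lam := by
          rw [← Matrix.mul_assoc, ← Matrix.mul_assoc]
      _ = L * Jb * Mb * Lam := by rw [hcompat']
      _ = L * (Jb * Mb) * Lam := by rw [Matrix.mul_assoc L]
      _ = L * (Mb * Jb) * Lam := by rw [hJbMb]
      _ = L * Mb * Jb * Lam := by rw [← Matrix.mul_assoc L]
  have tA : p t ⬝ᵥ (D1ᵀ * H1) *ᵥ (J1 *ᵥ v1 t) = v1 t ⬝ᵥ (H1 * J1) *ᵥ (D1 *ᵥ p t) := by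
    rw [mulVec_mulVec, dot_trans, hm1, ← mulVec_mulVec]
  have tB : p t ⬝ᵥ (L * Mb * Lam)ᵀ *ᵥ (J1 *ᵥ v1 t) = v1 t ⬝ᵥ (L * Mb * Jb * Lam) *ᵥ p t := by
    rw [mulVec_mulVec, dot_trans, hm1b]
  have c1 : p t ⬝ᵥ (Hh * Dh1) *ᵥ (J1 *ᵥ v1 t)
      = -(v1 t ⬝ᵥ (H1 * J1) *ᵥ (D1 *ᵥ p t - S t)) := by
    rw [hDh1, sub_mulVec, dotProduct_sub, neg_mulVec, dotProduct_neg, tB, tA,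
      mulVec_sub, dotProduct_sub, hA1S, dotProduct_neg]
    ring
  rw [h1, h2]
  simp only [dotProduct_neg, dotProduct_add, sumElim_dotProduct_sumElim]
  rw [c1, c2]
  ring
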